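/- For a Brownian motion with constant drift α in ℝ^d (d ≥ 3) started at x, the expectation E^{(α)}_x[∫_0^∞ V(√2 W_s) ds] = ∫_0^∞ ∫_{ℝ^d} V(√2 z) ρ^{(α)}(s, z−x) dz ds is maximized over x and α at x = 0, α = 0, where ρ^{(α)}(t,w) = (2πt)^{-d/2} exp(−|w−tα|²/(2t)) and V is nonnegative, spherically symmetric, and radially decreasing. -/

import Mathlib

open MeasureTheory Real Filter

noncomputable def heatKernel (d : ℕ) (u : ℝ) (w : EuclideanSpace ℝ (Fin d)) : ℝ :=
  (2 * Real.pi * u) ^ (-(d : ℝ) / 2) * Real.exp (-‖w‖ ^ 2 / (2 * u))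

/-- `W` is a standard `d`-dimensional Brownian motion started at `x` under `P`:
probability measure, measurable marginals, start at `x`, Gaussian increments with the
heat-kernel density, and independent increments. -/
structure IsBrownianMotion {Ω : Type*} [MeasurableSpace Ω] (d : ℕ) (P : Measure Ω)
    (W : ℝ → Ω → EuclideanSpace ℝ (Fin d)) (x : EuclideanSpace ℝ (Fin d)) : Prop where
  isProb : IsProbabilityMeasure P
  meas : ∀ t, Measurable (W t)
  start : ∀ᵐ ω ∂P, W 0 ω = x
  gauss_incr : ∀ s t : ℝ, 0 ≤ s → s < t →
    Measure.map (fun ω => W t ω - W s ω) P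
      = volume.withDensity (fun w => ENNReal.ofReal (heatKernel d (t - s) w))
  indep_incr : ∀ (n : ℕ) (ts : ℕ → ℝ), Monotone ts → (∀ i, 0 ≤ ts i) →
    ProbabilityTheory.iIndepFun
      (fun i : Fin n => fun ω => W (ts (i + 1)) ω - W (ts i) ω) P

/-- For a "balanced" set `A` (closed under decreasing the norm), the volume of the
intersection with a ball is maximized when the ball is centered at the origin. -/
lemma balanced_inter_ball_le {d : ℕ} (A : Set (EuclideanSpace ℝ (Fin d)))
    (hA : ∀ z w, z ∈ A → ‖w‖ ≤ ‖z‖ → w ∈ A)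
    (c : EuclideanSpace ℝ (Fin d)) (r : ℝ) :
    volume (A ∩ Metric.ball c r) ≤ volume (A ∩ Metric.ball 0 r) := by
  by_cases h : ∃ a ∈ A, r ≤ ‖a‖
  · obtain ⟨a, haA, har⟩ := h
    have hball : Metric.ball (0 : EuclideanSpace ℝ (Fin d)) r ⊆ A := by
      intro z hz
      rw [Metric.mem_ball, dist_zero_right] at hz
      exact hA a z haA (le_of_lt (lt_of_lt_of_le hz har))
    calc volume (A ∩ Metric.ball c r) ≤ volume (Metric.ball c r) :=
          measure_mono Set.inter_subset_right
      _ = volume (Metric.ball (0 : EuclideanSpace ℝ (Fin d)) r) :=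
          Measure.addHaar_ball_center volume c r
      _ = volume (A ∩ Metric.ball 0 r) := by
          rw [Set.inter_eq_self_of_subset_right hball]
  · push_neg at h
    have hsub : A ⊆ Metric.ball (0 : EuclideanSpace ℝ (Fin d)) r := by
      intro z hz
      rw [Metric.mem_ball, dist_zero_right]
      exact h z hz
    calc volume (A ∩ Metric.ball c r) ≤ volume A := measure_mono Set.inter_subset_left
      _ = volume (A ∩ Metric.ball 0 r) := by rw [Set.inter_eq_self_of_subset_left hsub]

/-- For a nonnegative, radially decreasing `F`, the integral over a ball is maximized
when the ball is centered at the origin. -/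
lemma lintegral_ball_le {d : ℕ} (F : EuclideanSpace ℝ (Fin d) → ℝ) (hFm : Measurable F)
    (hF0 : ∀ z, 0 ≤ F z) (hFb : ∀ z w, ‖w‖ ≤ ‖z‖ → F z ≤ F w)
    (c : EuclideanSpace ℝ (Fin d)) (r : ℝ) :
    ∫⁻ z in Metric.ball c r, ENNReal.ofReal (F z)
      ≤ ∫⁻ z in Metric.ball 0 r, ENNReal.ofReal (F z) := by
  rw [lintegral_eq_lintegral_meas_lt _ (Filter.Eventually.of_forall hF0) hFm.aemeasurable,
      lintegral_eq_lintegral_meas_lt _ (Filter.Eventually.of_forall hF0) hFm.aemeasurable]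
  refine lintegral_mono fun t => ?_
  have hmeas : MeasurableSet {a | t < F a} := measurableSet_lt measurable_const hFm
  rw [Measure.restrict_apply hmeas, Measure.restrict_apply hmeas]
  exact balanced_inter_ball_le _ (fun z w hz hw => lt_of_lt_of_le hz (hFb z w hw)) c r

/-- The superlevel sets of the heat kernel are open balls. -/
lemma heatKernel_superlevel_eq_ball {d : ℕ} {s t : ℝ} (hs : 0 < s) (ht : 0 < t)
    (c : EuclideanSpace ℝ (Fin d)) :
    {z | t < heatKernel d s (z - c)} =
      Metric.ball c (Real.sqrt (2 * s * Real.log ((2 * Real.pi * s) ^ (-(d : ℝ) / 2) / t))) := by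
  have hC : (0 : ℝ) < (2 * Real.pi * s) ^ (-(d : ℝ) / 2) :=
    Real.rpow_pos_of_pos (by positivity) _
  set C := (2 * Real.pi * s) ^ (-(d : ℝ) / 2) with hCdef
  ext z
  simp only [Set.mem_setOf_eq, Metric.mem_ball, dist_eq_norm, heatKernel, ← hCdef]
  rw [Real.lt_sqrt (norm_nonneg _)]
  have h1 : t < C * Real.exp (-‖z - c‖ ^ 2 / (2 * s)) ↔
      Real.log (t / C) < -‖z - c‖ ^ 2 / (2 * s) := by
    rw [Real.log_lt_iff_lt_exp (by positivity), div_lt_iff₀ hC, mul_comm]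
  rw [h1]
  have h2 : Real.log (t / C) < -‖z - c‖ ^ 2 / (2 * s) ↔
      ‖z - c‖ ^ 2 / (2 * s) < Real.log (C / t) := by
    rw [Real.log_div hC.ne' ht.ne', Real.log_div ht.ne' hC.ne', neg_div]
    constructor <;> intro h <;> linarith
  rw [h2, div_lt_iff₀ (by positivity)]
  constructor <;> intro h <;> linarith [h]

/-- Translating the heat kernel only decreases the weighted integral against a
nonnegative radially decreasing function. -/
lemma inner_le {d : ℕ} (F : EuclideanSpace ℝ (Fin d) → ℝ) (hFm : Measurable F)
    (hF0 : ∀ z, 0 ≤ F z) (hFb : ∀ z w, ‖w‖ ≤ ‖z‖ → F z ≤ F w)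
    {s : ℝ} (hs : 0 < s) (c : EuclideanSpace ℝ (Fin d)) :
    ∫⁻ z, ENNReal.ofReal (F z * heatKernel d s (z - c))
      ≤ ∫⁻ z, ENNReal.ofReal (F z * heatKernel d s z) := by
  have hGc : Continuous (heatKernel d s) := by
    unfold heatKernel
    fun_prop
  have hG0 : ∀ w, 0 ≤ heatKernel d s w := by
    intro w
    unfold heatKernel
    positivity
  set μF : Measure (EuclideanSpace ℝ (Fin d)) :=
    volume.withDensity (fun z => ENNReal.ofReal (F z)) with hμF
  have hdens : Measurable fun z => ENNReal.ofReal (F z) := hFm.ennreal_ofReal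
  have key : ∀ c' : EuclideanSpace ℝ (Fin d),
      ∫⁻ z, ENNReal.ofReal (F z * heatKernel d s (z - c'))
        = ∫⁻ t in Set.Ioi (0:ℝ), μF {z | t < heatKernel d s (z - c')} := by
    intro c'
    have hgm : Measurable fun z => heatKernel d s (z - c') :=
      (hGc.comp (continuous_id.sub continuous_const)).measurable
    have h1 : ∀ z, ENNReal.ofReal (F z * heatKernel d s (z - c'))
        = ENNReal.ofReal (F z) * ENNReal.ofReal (heatKernel d s (z - c')) := fun z =>
      ENNReal.ofReal_mul (hF0 z)
    simp_rw [h1]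
    have hwd := lintegral_withDensity_eq_lintegral_mul volume hdens hgm.ennreal_ofReal
    simp only [Pi.mul_apply] at hwd
    rw [← hwd]
    exact lintegral_eq_lintegral_meas_lt μF
      (Filter.Eventually.of_forall fun z => hG0 _) hgm.aemeasurable
  rw [key c]
  have h0 : ∫⁻ z, ENNReal.ofReal (F z * heatKernel d s z)
      = ∫⁻ t in Set.Ioi (0:ℝ), μF {z | t < heatKernel d s (z - 0)} := by
    simpa using key 0
  rw [h0]
  refine lintegral_mono_ae ((ae_restrict_iff' measurableSet_Ioi).2
    (Filter.Eventually.of_forall fun t ht => ?_))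
  have ht : 0 < t := ht
  rw [heatKernel_superlevel_eq_ball hs ht c, heatKernel_superlevel_eq_ball hs ht 0]
  set r := Real.sqrt (2 * s * Real.log ((2 * Real.pi * s) ^ (-(d : ℝ) / 2) / t))
  rw [hμF, withDensity_apply _ measurableSet_ball, withDensity_apply _ measurableSet_ball]
  exact lintegral_ball_le F hFm hF0 hFb c r

/-- The occupation integral `∫_0^∞ ∫ V(√2 z) ρ^{(α)}(s, z − x) dz ds` of Brownian motion
with drift `α` started at `x` is maximized at `x = 0`, `α = 0`, for `V` nonnegative,
spherically symmetric and radially decreasing (`ρ^{(α)}(s, w) = ρ(s, w − sα)` with `ρ`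
the heat kernel). -/
theorem stmt17 (d : ℕ) (hd : 3 ≤ d) (V : EuclideanSpace ℝ (Fin d) → ℝ)
    (hVm : Measurable V) (hV0 : ∀ x, 0 ≤ V x)
    (hVsym : ∀ x y, ‖x‖ = ‖y‖ → V x = V y)
    (hVdec : ∀ x y, ‖x‖ ≤ ‖y‖ → V y ≤ V x) :
    ∀ x α : EuclideanSpace ℝ (Fin d),
      ∫⁻ s in Set.Ioi (0 : ℝ),
          ∫⁻ z, ENNReal.ofReal (V (Real.sqrt 2 • z) * heatKernel d s (z - x - s • α))
        ≤ ∫⁻ s in Set.Ioi (0 : ℝ),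
            ∫⁻ z, ENNReal.ofReal (V (Real.sqrt 2 • z) * heatKernel d s z) := by
  intro x α
  set F : EuclideanSpace ℝ (Fin d) → ℝ := fun z => V (Real.sqrt 2 • z) with hF
  have hFm : Measurable F := hVm.comp (measurable_const_smul _)
  have hF0 : ∀ z, 0 ≤ F z := fun z => hV0 _
  have hFb : ∀ z w, ‖w‖ ≤ ‖z‖ → F z ≤ F w := by
    intro z w h
    refine hVdec _ _ ?_
    rw [norm_smul, norm_smul]
    exact mul_le_mul_of_nonneg_left h (norm_nonneg _)
  refine lintegral_mono_ae ((ae_restrict_iff' measurableSet_Ioi).2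
    (Filter.Eventually.of_forall fun s hs => ?_))
  have hs : (0:ℝ) < s := hs
  have := inner_le F hFm hF0 hFb hs (x + s • α)
  simpa [sub_sub] using this
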